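/- In the sparse recovery setup, assume: 0 < α·σ_max(XᵀX) < 2; 0 < β·√n < σ_max(XᵀX); ρ₂ < 1; and ‖Xᵀξ‖₂ ≤ √(Cα)·β for some constant C > 0. Then there exist t₁ ∈ ℕ and C' > 0 such that: (i) for every t ≥ t₁, ‖a^{(t)} − â‖₂ ≤ 2αβ√n/(1 − ρ₂) and g(a^{(t)}) ≤ g(â) + 2nα²β²σ_max(X)²/(1 − ρ₂)², where moreover g(â) ≤ (1/2)‖ξ‖₂²; and (ii) for every η > 0 and every integer t₂ ≥ t₁ + ‖a^{(t₁)} − a*‖₂²/(αβη): min_{t₁ ≤ t ≤ t₂} (f(a^{(t)}) − f(a*)) ≤ (η + C'αβ)β/2 and min_{t₁ ≤ t ≤ t₂} (‖a^{(t)}‖₁ − ‖a*‖₁) ≤ (η + (C + C')αβ)/2. -/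

import Mathlib

open Matrix

/-- Euclidean (ℓ2) norm of a vector in `ℝ^k`. -/
noncomputable def l2 {k : ℕ} (v : Fin k → ℝ) : ℝ := Real.sqrt (∑ i, (v i) ^ 2)

/-- ℓ1 norm of a vector in `ℝ^k`. -/
def l1 {k : ℕ} (v : Fin k → ℝ) : ℝ := ∑ i, |v i|

/-- Largest singular value of a matrix, i.e. its Euclidean operator norm. -/
noncomputable def smax {m k : ℕ} (A : Matrix (Fin m) (Fin k) ℝ) : ℝ :=
  ‖LinearMap.toContinuousLinearMap (Matrix.toEuclideanLin A)‖

namespace SRG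

lemma l2_nonneg {k : ℕ} (v : Fin k → ℝ) : 0 ≤ l2 v := Real.sqrt_nonneg _

lemma l2_sq {k : ℕ} (v : Fin k → ℝ) : l2 v ^ 2 = v ⬝ᵥ v := by
  rw [l2, Real.sq_sqrt (by positivity)]
  simp [dotProduct, sq]

lemma l2_eq_norm {k : ℕ} (v : Fin k → ℝ) :
    l2 v = ‖(WithLp.equiv 2 (Fin k → ℝ)).symm v‖ := by
  rw [EuclideanSpace.norm_eq, l2]
  congr 1; apply Finset.sum_congr rfl; intro i _
  simp [Real.norm_eq_abs, sq_abs]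

lemma l2_eq_zero {k : ℕ} {v : Fin k → ℝ} (h : l2 v = 0) : v = 0 := by
  rw [l2_eq_norm] at h
  have := norm_eq_zero.mp h
  simpa using congrArg (WithLp.equiv 2 (Fin k → ℝ)) this

lemma l2_add_le {k : ℕ} (u v : Fin k → ℝ) : l2 (u + v) ≤ l2 u + l2 v := by
  rw [l2_eq_norm, l2_eq_norm, l2_eq_norm]
  exact norm_add_le _ _

lemma l2_smul {k : ℕ} (c : ℝ) (v : Fin k → ℝ) : l2 (c • v) = |c| * l2 v := by
  rw [l2_eq_norm, l2_eq_norm]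
  exact norm_smul c ((WithLp.equiv 2 (Fin k → ℝ)).symm v)

lemma l2_neg {k : ℕ} (v : Fin k → ℝ) : l2 (-v) = l2 v := by
  simpa using l2_smul (-1) v

lemma l2_sub_le {k : ℕ} (u v : Fin k → ℝ) : l2 (u - v) ≤ l2 u + l2 v := by
  rw [sub_eq_add_neg]
  simpa [l2_neg] using l2_add_le u (-v)

lemma smax_nonneg {m k : ℕ} (A : Matrix (Fin m) (Fin k) ℝ) : 0 ≤ smax A := norm_nonneg _

lemma l2_mulVec_le {m k : ℕ} (A : Matrix (Fin m) (Fin k) ℝ) (v : Fin k → ℝ) :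
    l2 (A.mulVec v) ≤ smax A * l2 v := by
  rw [l2_eq_norm, l2_eq_norm v]
  exact (LinearMap.toContinuousLinearMap (Matrix.toEuclideanLin A)).le_opNorm _

lemma dot_le_l2_mul {k : ℕ} (u v : Fin k → ℝ) : u ⬝ᵥ v ≤ l2 u * l2 v := by
  rw [l2_eq_norm, l2_eq_norm]
  have h := real_inner_le_norm ((WithLp.equiv 2 (Fin k → ℝ)).symm u)
      ((WithLp.equiv 2 (Fin k → ℝ)).symm v)
  refine le_trans (le_of_eq ?_) h
  simp [PiLp.inner_apply, RCLike.inner_apply, dotProduct, mul_comm]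

lemma adj {m k : ℕ} (A : Matrix (Fin m) (Fin k) ℝ) (r : Fin m → ℝ) (d : Fin k → ℝ) :
    (Aᵀ.mulVec r) ⬝ᵥ d = r ⬝ᵥ (A.mulVec d) := by
  rw [Matrix.mulVec_transpose, Matrix.dotProduct_mulVec]

lemma dot_expand {k : ℕ} (u w : Fin k → ℝ) :
    (u + w) ⬝ᵥ (u + w) = u ⬝ᵥ u + 2 * (u ⬝ᵥ w) + w ⬝ᵥ w := by
  rw [add_dotProduct, dotProduct_add, dotProduct_add,
    dotProduct_comm w u]
  ring

lemma dot_sub_expand {k : ℕ} (u w : Fin k → ℝ) :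
    (u - w) ⬝ᵥ (u - w) = u ⬝ᵥ u - 2 * (u ⬝ᵥ w) + w ⬝ᵥ w := by
  rw [sub_dotProduct, dotProduct_sub, dotProduct_sub,
    dotProduct_comm w u]
  ring

end SRG

set_option maxHeartbeats 1600000 in
/-- two-phase dynamics of ℓ1-regularized subgradient descent for sparse
recovery: memorization near the least-squares solution `â`, then an additional
`‖a^{(t₁)} − a*‖₂²/(αβη)` steps for the `f`-gap and the ℓ1-gap to become small. -/
theorem sparse_recovery_grokking
    {N n : ℕ} (X : Matrix (Fin N) (Fin n) ℝ)
    (astar : Fin n → ℝ) (ξ : Fin N → ℝ)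
    (ystar : Fin N → ℝ) (hystar : ystar = X.mulVec astar + ξ)
    (gf : (Fin n → ℝ) → ℝ) (hgf : ∀ v, gf v = (1 / 2) * (l2 (X.mulVec v - ystar)) ^ 2)
    (α β : ℝ)
    (f : (Fin n → ℝ) → ℝ) (hfdef : ∀ v, f v = gf v + β * l1 v)
    (hα : 0 < α * smax (Xᵀ * X)) (hα2 : α * smax (Xᵀ * X) < 2)
    (hβ : 0 < β * Real.sqrt n) (hβ2 : β * Real.sqrt n < smax (Xᵀ * X))
    (ρ₂ : ℝ) (hρ₂def : ρ₂ = smax ((1 : Matrix (Fin n) (Fin n) ℝ) - α • (Xᵀ * X)))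
    (hρ₂ : ρ₂ < 1)
    (C : ℝ) (hC : 0 < C) (hξ : l2 (Xᵀ.mulVec ξ) ≤ Real.sqrt (C * α) * β)
    (ahat : Fin n → ℝ) (hahat : ahat = (Xᵀ * X)⁻¹.mulVec (Xᵀ.mulVec ystar))
    (a H : ℕ → (Fin n → ℝ))
    (hH : ∀ t, 1 ≤ t → ∀ b : Fin n → ℝ, l1 (a t) + ∑ i, H t i * (b i - a t i) ≤ l1 b)
    (hrec : ∀ t, 1 ≤ t →
      a (t + 1) = a t - α • (Xᵀ.mulVec (X.mulVec (a t) - ystar) + β • H t)) :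
    ∃ t₁ : ℕ, 1 ≤ t₁ ∧ ∃ C' : ℝ, 0 < C' ∧
      gf ahat ≤ (1 / 2) * (l2 ξ) ^ 2 ∧
      (∀ t, t₁ ≤ t →
        l2 (a t - ahat) ≤ 2 * α * β * Real.sqrt n / (1 - ρ₂) ∧
        gf (a t) ≤ gf ahat + 2 * n * α ^ 2 * β ^ 2 * (smax X) ^ 2 / (1 - ρ₂) ^ 2) ∧
      (∀ η : ℝ, 0 < η → ∀ t₂ : ℕ,
        (t₁ : ℝ) + (l2 (a t₁ - astar)) ^ 2 / (α * β * η) ≤ (t₂ : ℝ) →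
        (∃ t, t₁ ≤ t ∧ t ≤ t₂ ∧ f (a t) - f astar ≤ (η + C' * α * β) * β / 2) ∧
        (∃ t, t₁ ≤ t ∧ t ≤ t₂ ∧ l1 (a t) - l1 astar ≤ (η + (C + C') * α * β) / 2)) := by
  open SRG in
  -- basic positivity
  set M : Matrix (Fin n) (Fin n) ℝ := Xᵀ * X with hMdef
  have hsM : 0 ≤ smax M := smax_nonneg M
  have hα0 : 0 < α := by
    rcases lt_or_ge 0 α with h | h
    · exact h
    · exfalso; nlinarith
  have hsn : 0 < Real.sqrt n := by
    rcases lt_or_ge 0 (Real.sqrt n) with h | h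
    · exact h
    · exfalso
      have h0 : Real.sqrt n = 0 := le_antisymm h (Real.sqrt_nonneg _)
      rw [h0, mul_zero] at hβ
      exact lt_irrefl 0 hβ
  have hβ0 : 0 < β := by nlinarith
  have hρ0 : 0 ≤ ρ₂ := hρ₂def ▸ smax_nonneg _
  have h1ρ : 0 < 1 - ρ₂ := by linarith
  -- contraction of (1 - α•M)
  have hcon : ∀ w : Fin n → ℝ, l2 (w - α • (M.mulVec w)) ≤ ρ₂ * l2 w := by
    intro w
    have h1 : ((1 : Matrix (Fin n) (Fin n) ℝ) - α • M).mulVec w = w - α • (M.mulVec w) := by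
      rw [Matrix.sub_mulVec, Matrix.one_mulVec, Matrix.smul_mulVec]
    calc l2 (w - α • (M.mulVec w)) = l2 (((1 : Matrix (Fin n) (Fin n) ℝ) - α • M).mulVec w) := by
          rw [h1]
      _ ≤ ρ₂ * l2 w := by rw [hρ₂def]; exact l2_mulVec_le _ w
  -- M is invertible; normal equation
  have hMinj : Function.Injective M.mulVec := by
    intro w w' hww
    have hz : M.mulVec (w - w') = 0 := by rw [Matrix.mulVec_sub, hww, sub_self]
    have h2 : l2 (w - w') ≤ ρ₂ * l2 (w - w') := by
      have := hcon (w - w')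
      rwa [hz, smul_zero, sub_zero] at this
    have h3 : l2 (w - w') = 0 := by nlinarith [l2_nonneg (w - w')]
    exact sub_eq_zero.mp (l2_eq_zero h3)
  have hMunit : IsUnit M.det :=
    (Matrix.isUnit_iff_isUnit_det M).mp (Matrix.mulVec_injective_iff_isUnit.mp hMinj)
  -- normal equation : Xᵀ y* = M â
  have hnorm : M.mulVec ahat = Xᵀ.mulVec ystar := by
    rw [hahat, Matrix.mulVec_mulVec, Matrix.mul_nonsing_inv M hMunit, Matrix.one_mulVec]
  -- gradient identity
  have grad : ∀ v : Fin n → ℝ, Xᵀ.mulVec (X.mulVec v - ystar) = M.mulVec (v - ahat) := by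
    intro v
    rw [Matrix.mulVec_sub, Matrix.mulVec_sub, Matrix.mulVec_mulVec, ← hMdef, hnorm]
  -- quadratic expansion of gf
  have gexp : ∀ v b : Fin n → ℝ,
      gf b = gf v + (M.mulVec (v - ahat)) ⬝ᵥ (b - v) + (1/2) * l2 (X.mulVec (b - v)) ^ 2 := by
    intro v b
    have hXb : X.mulVec b - ystar = (X.mulVec v - ystar) + X.mulVec (b - v) := by
      rw [Matrix.mulVec_sub]; abel
    rw [hgf, hgf, l2_sq, l2_sq, l2_sq, hXb, dot_expand, ← grad v, adj]
    ring
  have gmin : ∀ b : Fin n → ℝ, gf ahat ≤ gf b := by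
    intro b
    have := gexp ahat b
    rw [sub_self, Matrix.mulVec_zero, zero_dotProduct] at this
    nlinarith [l2_nonneg (X.mulVec (b - ahat)), sq_nonneg (l2 (X.mulVec (b - ahat)))]
  have hgahat : gf ahat ≤ (1 / 2) * (l2 ξ) ^ 2 := by
    have h1 : gf astar = (1/2) * (l2 ξ) ^ 2 := by
      rw [hgf, hystar]
      congr 2
      rw [show X.mulVec astar - (X.mulVec astar + ξ) = -ξ by abel, l2_neg]
    linarith [gmin astar]
  -- subgradient bound
  have hHb : ∀ t : ℕ, 1 ≤ t → l2 (H t) ≤ Real.sqrt n := by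
    intro t ht
    have habs : ∀ i, |H t i| ≤ 1 := by
      intro i
      have key : ∀ c : ℝ, H t i * c ≤ |a t i + c| - |a t i| := by
        intro c
        set bv : Fin n → ℝ := fun j => a t j + (if j = i then c else 0) with hbv
        have hb := hH t ht bv
        have hsum1 : ∑ j, H t j * (bv j - a t j) = H t i * c := by
          rw [Finset.sum_eq_single i]
          · simp [hbv]
          · intro j _ hji; simp [hbv, hji]
          · intro hi; exact absurd (Finset.mem_univ i) hi
        have hsum2 : l1 bv - l1 (a t) = |a t i + c| - |a t i| := by
          rw [l1, l1, ← Finset.sum_sub_distrib]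
          rw [Finset.sum_eq_single i]
          · simp [hbv]
          · intro j _ hji; simp [hbv, hji]
          · intro hi; exact absurd (Finset.mem_univ i) hi
        rw [hsum1] at hb
        linarith
      have k1 := key 1
      have k2 := key (-1)
      have b1 : |a t i + 1| - |a t i| ≤ 1 := by
        have := abs_sub_abs_le_abs_sub (a t i + 1) (a t i)
        simpa using this
      have b2 : |a t i + (-1)| - |a t i| ≤ 1 := by
        have := abs_sub_abs_le_abs_sub (a t i + (-1)) (a t i)
        simpa using this
      rw [abs_le]
      constructor <;> nlinarith
    rw [l2]
    have : ∑ i, (H t i) ^ 2 ≤ (n : ℝ) := by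
      calc ∑ i, (H t i) ^ 2 ≤ ∑ _i : Fin n, (1:ℝ) := by
            apply Finset.sum_le_sum
            intro i _
            have := habs i
            nlinarith [abs_nonneg (H t i), sq_abs (H t i)]
        _ = (n : ℝ) := by simp
    exact Real.sqrt_le_sqrt this
  -- error recursion
  have hstep : ∀ t : ℕ, 1 ≤ t → a (t+1) - ahat
      = ((a t - ahat) - α • (M.mulVec (a t - ahat))) - (α*β) • H t := by
    intro t ht
    rw [hrec t ht, grad (a t)]
    generalize M.mulVec (a t - ahat) = u
    funext i
    simp only [Pi.sub_apply, Pi.add_apply, Pi.smul_apply, smul_eq_mul]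
    ring
  set D : ℝ := α * β * Real.sqrt n with hDdef
  have hD : 0 < D := by positivity
  set R : ℝ := 2 * α * β * Real.sqrt n / (1 - ρ₂) with hRdef
  have hRD : (1 - ρ₂) * R = 2 * D := by
    rw [hRdef, hDdef]
    field_simp
  have hR0 : 0 < R := by positivity
  have econ : ∀ t : ℕ, 1 ≤ t →
      l2 (a (t+1) - ahat) ≤ ρ₂ * l2 (a t - ahat) + D := by
    intro t ht
    rw [hstep t ht]
    calc l2 (((a t - ahat) - α • (M.mulVec (a t - ahat))) - (α*β) • H t)
        ≤ l2 ((a t - ahat) - α • (M.mulVec (a t - ahat))) + l2 ((α*β) • H t) :=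
          l2_sub_le _ _
      _ ≤ ρ₂ * l2 (a t - ahat) + D := by
          have h1 := hcon (a t - ahat)
          have h2 : l2 ((α*β) • H t) ≤ D := by
            rw [l2_smul, abs_of_pos (by positivity : (0:ℝ) < α*β), hDdef]
            have := hHb t ht
            nlinarith [l2_nonneg (H t)]
          linarith
  have key1 : ∀ t : ℕ, 1 ≤ t → l2 (a t - ahat) ≤ R → l2 (a (t+1) - ahat) ≤ R := by
    intro t ht hle
    have h0 := econ t ht
    have h1 : ρ₂ * l2 (a t - ahat) ≤ ρ₂ * R := mul_le_mul_of_nonneg_left hle hρ0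
    linarith [hRD, hD]
  have key2 : ∀ t : ℕ, 1 ≤ t → R < l2 (a t - ahat) →
      l2 (a (t+1) - ahat) ≤ l2 (a t - ahat) - D := by
    intro t ht hgt
    have h0 := econ t ht
    have h1 : (1 - ρ₂) * R ≤ (1 - ρ₂) * l2 (a t - ahat) :=
      mul_le_mul_of_nonneg_left hgt.le h1ρ.le
    linarith [hRD, hD]
  -- find t₁
  have hexist : ∃ j : ℕ, l2 (a (1 + j) - ahat) ≤ R := by
    by_contra hcon2
    push_neg at hcon2
    have hdec : ∀ k : ℕ, l2 (a (1 + k) - ahat) ≤ l2 (a 1 - ahat) - k * D := by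
      intro k
      induction k with
      | zero => simp
      | succ k ih =>
        have h1 := key2 (1 + k) (by omega) (hcon2 k)
        have : (1 + k) + 1 = 1 + (k + 1) := by omega
        rw [this] at h1
        push_cast
        linarith
    obtain ⟨k₀, hk₀⟩ := exists_nat_gt (l2 (a 1 - ahat) / D)
    have hk₀D : l2 (a 1 - ahat) < (k₀ : ℝ) * D := by
      rw [div_lt_iff₀ hD] at hk₀
      exact hk₀
    have h5 := hdec k₀
    have h6 := hcon2 k₀
    linarith [hR0, hk₀D]
  obtain ⟨j, hj⟩ := hexist
  refine ⟨1 + j, by omega, ?_⟩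
  -- phase-1 invariant
  have hinv : ∀ t : ℕ, 1 + j ≤ t → l2 (a t - ahat) ≤ R := by
    intro t ht
    induction t, ht using Nat.le_induction with
    | base => exact hj
    | succ t ht ih => exact key1 t (by omega) ih
  -- constants
  set Kc : ℝ := 2 * α * Real.sqrt n * smax M / (1 - ρ₂) + Real.sqrt n with hKc
  set Q : ℝ := C * α / (1 - ρ₂) with hQ
  have hKc0 : 0 ≤ Kc := by positivity
  have hQ0 : 0 ≤ Q := by positivity
  clear_value Kc Q
  have hsqn : Real.sqrt n ^ 2 = (n : ℝ) := Real.sq_sqrt (Nat.cast_nonneg n)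
  refine ⟨Kc ^ 2 + Q + 1, by positivity, hgahat, ?_, ?_⟩
  · -- phase-1 bounds
    intro t ht
    refine ⟨hinv t ht, ?_⟩
    have hexp := gexp ahat (a t)
    rw [sub_self, Matrix.mulVec_zero, zero_dotProduct, add_zero] at hexp
    have h1 : l2 (X.mulVec (a t - ahat)) ≤ smax X * R := by
      calc l2 (X.mulVec (a t - ahat)) ≤ smax X * l2 (a t - ahat) := l2_mulVec_le _ _
        _ ≤ smax X * R := mul_le_mul_of_nonneg_left (hinv t ht) (smax_nonneg X)
    have h2 : l2 (X.mulVec (a t - ahat)) ^ 2 ≤ (smax X * R) ^ 2 :=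
      pow_le_pow_left₀ (l2_nonneg _) h1 2
    have h3 : (1/2) * (smax X * R) ^ 2
        = 2 * n * α ^ 2 * β ^ 2 * (smax X) ^ 2 / (1 - ρ₂) ^ 2 := by
      rw [hRdef, mul_pow, div_pow, mul_pow, mul_pow, mul_pow, hsqn]
      ring
    rw [hexp]
    linarith
  · -- phase-2
    intro η hη t₂ ht₂
    have hd0 : (0:ℝ) ≤ l2 (a (1+j) - astar) ^ 2 := sq_nonneg _
    have hαβη : 0 < α * β * η := by positivity
    -- bound on the subgradient
    have hSb : ∀ t : ℕ, 1 + j ≤ t →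
        l2 (M.mulVec (a t - ahat) + β • H t) ≤ β * Kc := by
      intro t ht
      have h1 : l2 (M.mulVec (a t - ahat)) ≤ smax M * R := by
        calc l2 (M.mulVec (a t - ahat)) ≤ smax M * l2 (a t - ahat) := l2_mulVec_le _ _
          _ ≤ smax M * R := mul_le_mul_of_nonneg_left (hinv t ht) hsM
      have h2 : l2 (β • H t) ≤ β * Real.sqrt n := by
        rw [l2_smul, abs_of_pos hβ0]
        exact mul_le_mul_of_nonneg_left (hHb t (by omega)) hβ0.le
      have h3 : β * Kc = smax M * R + β * Real.sqrt n := by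
        rw [hKc, hRdef]
        field_simp
      calc l2 (M.mulVec (a t - ahat) + β • H t)
          ≤ l2 (M.mulVec (a t - ahat)) + l2 (β • H t) := l2_add_le _ _
        _ ≤ β * Kc := by rw [h3]; linarith
    -- subgradient inequality for f
    have fgap : ∀ t : ℕ, 1 ≤ t → f (a t) - f astar
        ≤ (M.mulVec (a t - ahat) + β • H t) ⬝ᵥ (a t - astar) := by
      intro t ht
      have hg := gexp (a t) astar
      have hl1 := hH t ht astar
      have hl1' : (H t) ⬝ᵥ (astar - a t) = ∑ i, H t i * (astar i - a t i) := rfl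
      have hdot : (M.mulVec (a t - ahat) + β • H t) ⬝ᵥ (a t - astar)
          = -((M.mulVec (a t - ahat)) ⬝ᵥ (astar - a t)) - β * ((H t) ⬝ᵥ (astar - a t)) := by
        rw [add_dotProduct, smul_dotProduct]
        have h5 : (a t - astar) = -(astar - a t) := by abel
        rw [h5, dotProduct_neg, dotProduct_neg]
        simp [smul_eq_mul]
        ring
      rw [hfdef, hfdef, hdot]
      have h6 : β * ((H t) ⬝ᵥ (astar - a t)) ≤ β * (l1 astar - l1 (a t)) := by
        apply mul_le_mul_of_nonneg_left _ hβ0.le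
        rw [hl1']
        linarith
      nlinarith [sq_nonneg (l2 (X.mulVec (astar - a t))), l2_nonneg (X.mulVec (astar - a t))]
    -- descent identity
    have ddesc : ∀ t : ℕ, 1 ≤ t →
        l2 (a (t+1) - astar) ^ 2 = l2 (a t - astar) ^ 2
          - 2 * α * ((M.mulVec (a t - ahat) + β • H t) ⬝ᵥ (a t - astar))
          + α ^ 2 * l2 (M.mulVec (a t - ahat) + β • H t) ^ 2 := by
      intro t ht
      set s : Fin n → ℝ := M.mulVec (a t - ahat) + β • H t with hs
      have h1 : a (t+1) - astar = (a t - astar) - α • s := by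
        rw [hrec t ht, grad (a t), hs]
        abel
      rw [h1, l2_sq, dot_sub_expand, l2_sq, l2_sq, dotProduct_smul,
        smul_dotProduct, dotProduct_smul,
        dotProduct_comm (a t - astar) s]
      simp only [smul_eq_mul]
      ring
    -- key per-step inequality
    have hkey : ∀ t : ℕ, 1 + j ≤ t →
        l2 (a (t+1) - astar) ^ 2 ≤ l2 (a t - astar) ^ 2
          - 2 * α * (f (a t) - f astar) + α ^ 2 * (β * Kc) ^ 2 := by
      intro t ht
      have h1 := ddesc t (by omega)
      have h2 := fgap t (by omega)
      have h3 : l2 (M.mulVec (a t - ahat) + β • H t) ^ 2 ≤ (β * Kc) ^ 2 :=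
        pow_le_pow_left₀ (l2_nonneg _) (hSb t ht) 2
      have h4 : 2 * α * (f (a t) - f astar)
          ≤ 2 * α * ((M.mulVec (a t - ahat) + β • H t) ⬝ᵥ (a t - astar)) :=
        mul_le_mul_of_nonneg_left h2 (by positivity)
      nlinarith [sq_nonneg α]
    -- the minimum over the window
    have hmin : ∃ t, 1 + j ≤ t ∧ t ≤ t₂ ∧
        f (a t) - f astar ≤ η * β / 2 + Kc ^ 2 * α * β ^ 2 / 2 := by
      by_contra hno
      push_neg at hno
      have ht₁t₂ : 1 + j ≤ t₂ := by
        have h1 : (0:ℝ) ≤ l2 (a (1+j) - astar) ^ 2 / (α * β * η) := by positivity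
        have h2 : ((1 + j : ℕ) : ℝ) ≤ (t₂ : ℝ) := by push_cast at ht₂ ⊢; linarith
        exact_mod_cast h2
      have hdec2 : ∀ k : ℕ, 1 + j + k ≤ t₂ + 1 →
          l2 (a (1 + j + k) - astar) ^ 2
            ≤ l2 (a (1 + j) - astar) ^ 2 - k * (α * β * η) := by
        intro k hk
        induction k with
        | zero => simp
        | succ k ih =>
          have hik := ih (by omega)
          have h1 := hkey (1 + j + k) (by omega)
          have h2 := hno (1 + j + k) (by omega) (by omega)
          have h3 : 2 * α * (η * β / 2 + Kc ^ 2 * α * β ^ 2 / 2)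
              ≤ 2 * α * (f (a (1 + j + k)) - f astar) :=
            mul_le_mul_of_nonneg_left h2.le (by positivity)
          have h4 : (1 + j + k) + 1 = 1 + j + (k + 1) := by omega
          rw [h4] at h1
          have h5 : 2 * α * (η * β / 2 + Kc ^ 2 * α * β ^ 2 / 2)
              = α * η * β + Kc ^ 2 * α ^ 2 * β ^ 2 := by ring
          have h6 : α ^ 2 * (β * Kc) ^ 2 = Kc ^ 2 * α ^ 2 * β ^ 2 := by ring
          push_cast
          linarith
      have hk := hdec2 (t₂ + 1 - (1 + j)) (by omega)
      have hcast : ((t₂ + 1 - (1 + j) : ℕ) : ℝ) = (t₂ : ℝ) + 1 - (1 + (j:ℝ)) := by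
        have : 1 + j ≤ t₂ + 1 := by omega
        push_cast [Nat.cast_sub this]
        ring
      have hidx : 1 + j + (t₂ + 1 - (1 + j)) = t₂ + 1 := by omega
      rw [hidx, hcast] at hk
      have hdiv : (l2 (a (1+j) - astar) ^ 2 / (α * β * η)) * (α * β * η)
          = l2 (a (1+j) - astar) ^ 2 := div_mul_cancel₀ _ (ne_of_gt hαβη)
      have h7 : ((t₂ : ℝ) + 1 - (1 + (j:ℝ))) * (α * β * η)
          ≥ (l2 (a (1+j) - astar) ^ 2 / (α * β * η) + 1) * (α * β * η) := by
        apply mul_le_mul_of_nonneg_right _ hαβη.le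
        push_cast at ht₂
        linarith
      have h8 := sq_nonneg (l2 (a (t₂ + 1) - astar))
      nlinarith
    obtain ⟨t, htt₁, htt₂, htle⟩ := hmin
    constructor
    · refine ⟨t, htt₁, htt₂, ?_⟩
      have h0 : 0 ≤ ((Q + 1) * α) * β ^ 2 :=
        mul_nonneg (mul_nonneg (by linarith) hα0.le) (sq_nonneg β)
      have h1 : (η + (Kc ^ 2 + Q + 1) * α * β) * β / 2
          = η * β / 2 + Kc ^ 2 * α * β ^ 2 / 2 + ((Q + 1) * α) * β ^ 2 / 2 := by ring
      linarith
    · refine ⟨t, htt₁, htt₂, ?_⟩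
      -- bound gf astar - gf ahat
      have hgap2 : gf astar - gf ahat ≤ Q * α * β ^ 2 / 2 := by
        set u : Fin n → ℝ := Xᵀ.mulVec ξ with hu
        set w : Fin n → ℝ := astar - ahat with hw
        have hMw : M.mulVec w = -u := by
          rw [hw, ← grad astar, hystar]
          rw [show X.mulVec astar - (X.mulVec astar + ξ) = -ξ by abel, Matrix.mulVec_neg]
        have hlw : (1 - ρ₂) * l2 w ≤ α * l2 u := by
          have h1 := hcon w
          rw [hMw] at h1
          have h2 : l2 w ≤ l2 (w - α • (-u)) + l2 (α • (-u)) := by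
            have h3 : w = (w - α • (-u)) + α • (-u) := by abel
            calc l2 w = l2 ((w - α • (-u)) + α • (-u)) := by rw [← h3]
              _ ≤ _ := l2_add_le _ _
          have h4 : l2 (α • (-u)) = α * l2 u := by
            rw [l2_smul, abs_of_pos hα0, l2_neg]
          linarith
        have hlu2 : l2 u ^ 2 ≤ C * α * β ^ 2 := by
          have h1 : l2 u ^ 2 ≤ (Real.sqrt (C * α) * β) ^ 2 :=
            pow_le_pow_left₀ (l2_nonneg _) hξ 2
          rw [mul_pow, Real.sq_sqrt (by positivity : (0:ℝ) ≤ C * α)] at h1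
          linarith
        have hXw : l2 (X.mulVec w) ^ 2 ≤ l2 u * l2 w := by
          rw [l2_sq]
          have h1 : (X.mulVec w) ⬝ᵥ (X.mulVec w) = (M.mulVec w) ⬝ᵥ w := by
            rw [hMdef, ← Matrix.mulVec_mulVec, adj]
          rw [h1, hMw, neg_dotProduct]
          have h2 : u ⬝ᵥ (-w) ≤ l2 u * l2 (-w) := dot_le_l2_mul _ _
          rw [l2_neg] at h2
          have h3 : -(u ⬝ᵥ w) = u ⬝ᵥ (-w) := by rw [dotProduct_neg]
          linarith
        have hexp := gexp ahat astar
        rw [sub_self, Matrix.mulVec_zero, zero_dotProduct, add_zero] at hexp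
        have hw2 : l2 u * l2 w ≤ l2 u * (α * l2 u / (1 - ρ₂)) := by
          apply mul_le_mul_of_nonneg_left _ (l2_nonneg u)
          rw [le_div_iff₀ h1ρ]
          linarith [hlw]
        have hQid : l2 u * (α * l2 u / (1 - ρ₂)) = (α / (1 - ρ₂)) * l2 u ^ 2 := by
          field_simp
        have hfin : l2 u * (α * l2 u / (1 - ρ₂)) ≤ Q * α * β ^ 2 := by
          rw [hQid, hQ]
          have h9 : C * α / (1 - ρ₂) * α * β ^ 2 = (α / (1 - ρ₂)) * (C * α * β ^ 2) := by
            ring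
          rw [h9]
          exact mul_le_mul_of_nonneg_left hlu2 (by positivity)
        rw [hexp, ← hw]
        nlinarith [hXw, hw2]
      -- combine
      have hgm := gmin (a t)
      have hfe := hfdef (a t)
      have hfe2 := hfdef astar
      have hmul : β * (l1 (a t) - l1 astar)
          ≤ η * β / 2 + Kc ^ 2 * α * β ^ 2 / 2 + Q * α * β ^ 2 / 2 := by
        have : β * (l1 (a t) - l1 astar)
            = (f (a t) - f astar) - (gf (a t) - gf astar) := by
          rw [hfe, hfe2]; ring
        rw [this]
        linarith
      rw [← mul_le_mul_iff_right₀ hβ0]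
      have hrhs : β * ((η + (C + (Kc ^ 2 + Q + 1)) * α * β) / 2)
          = η * β / 2 + (C + Kc ^ 2 + Q + 1) * α * β ^ 2 / 2 := by ring
      rw [hrhs]
      nlinarith [mul_pos hα0 (mul_pos hβ0 hβ0), hC, hmul]
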